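/- Let x, x' ∈ Σ_q^n with supp(x−x') = {i_1 < i_2 < ⋯ < i_d}, d ≥ 2; let 0 = j_0 < j_1 < ⋯ < j_m = n be the right endpoints of the runs of x and 0 = j'_0 < j'_1 < ⋯ < j'_{m'} = n the right endpoints of the runs of x'. If i ∈ [m] and i' ∈ [m'] are such that supp(x−x') ∩ [min(j_i, j'_{i'}), max(j_i, j'_{i'})] = ∅, then d_H(x_{[n]∖{j_i}}, x'_{[n]∖{j'_{i'}}}) ≥ d; in particular, for no d' < d does such a pair satisfy d_H(x_{[n]∖{j_i}}, x'_{[n]∖{j'_{i'}}}) = d'. -/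

import Mathlib

lemma jmono_aux (j : ℕ → ℕ) (m : ℕ) (h : ∀ i, i < m → j i < j (i + 1)) :
    ∀ p r, p ≤ r → r ≤ m → j p ≤ j r := by
  intro p r hpr hrm
  induction r with
  | zero =>
    have hp : p = 0 := by omega
    rw [hp]
  | succ r ih =>
    rcases Nat.lt_or_ge p (r + 1) with h1 | h1
    · exact le_trans (ih (by omega) (by omega)) (le_of_lt (h r (by omega)))
    · have : p = r + 1 := by omega
      subst this; rfl


/-- Sequences of length `n` are modelled as functions `ℕ → Fin q` whose relevant
positions are `1, …, n` (1-based, as in the paper). `delN x j` deletes position `j`. -/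
def delN {q : ℕ} (x : ℕ → Fin q) (j : ℕ) : ℕ → Fin q :=
  fun i => if i < j then x i else x (i + 1)

/-- Hamming distance between two length-`n` sequences (positions `1, …, n`). -/
def hdist {q : ℕ} (n : ℕ) (u v : ℕ → Fin q) : ℕ :=
  ((Finset.Icc 1 n).filter fun i => u i ≠ v i).card

/-- `j 0 = 0 < j 1 < ⋯ < j m = n` are the right endpoints of the runs of the
length-`n` sequence `x`: each block `x_{[j_{i−1}+1, j_i]}` is constant and adjacent
blocks carry different symbols. -/
def IsRunDecomp {q : ℕ} (n m : ℕ) (x : ℕ → Fin q) (j : ℕ → ℕ) : Prop :=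
  j 0 = 0 ∧ j m = n ∧ (∀ i, i < m → j i < j (i + 1)) ∧
  (∀ i, 1 ≤ i → i ≤ m → ∀ a b, j (i - 1) + 1 ≤ a → a ≤ j i →
      j (i - 1) + 1 ≤ b → b ≤ j i → x a = x b) ∧
  (∀ i, 1 ≤ i → i < m → x (j i) ≠ x (j i + 1))

/-- If `d = |supp(x − x')| ≥ 2` and the run endpoints `j_i` of `x` and `j'_{i'}` of `x'`
satisfy `supp(x − x') ∩ [min(j_i, j'_{i'}), max(j_i, j'_{i'})] = ∅`, then the Hamming
distance of the two deleted sequences `x_{[n]∖{j_i}}` and `x'_{[n]∖{j'_{i'}}}` is at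
least `d`; in particular it is never equal to any `d' < d`. -/
theorem stmt10 (q n m m' d : ℕ) (hq : 2 ≤ q) (hd : 2 ≤ d)
    (x x' : ℕ → Fin q)
    (hsupp : ((Finset.Icc 1 n).filter fun k => x k ≠ x' k).card = d)
    (j j' : ℕ → ℕ)
    (hx : IsRunDecomp n m x j) (hx' : IsRunDecomp n m' x' j')
    (i i' : ℕ) (hi1 : 1 ≤ i) (him : i ≤ m) (hi'1 : 1 ≤ i') (him' : i' ≤ m')
    (hempty : ((Finset.Icc 1 n).filter fun k => x k ≠ x' k) ∩
        Finset.Icc (min (j i) (j' i')) (max (j i) (j' i')) = ∅) :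
    d ≤ hdist (n - 1) (delN x (j i)) (delN x' (j' i')) := by
  obtain ⟨hj0, hjm, hjmono, -, -⟩ := hx
  obtain ⟨hj'0, hj'm, hj'mono, -, -⟩ := hx'
  set a := j i with ha
  set b := j' i' with hb
  have han : a ≤ n := hjm ▸ jmono_aux j m hjmono i m him le_rfl
  have hbn : b ≤ n := hj'm ▸ jmono_aux j' m' hj'mono i' m' him' le_rfl
  have ha1 : 1 ≤ a := by
    have h := hjmono (i - 1) (by omega)
    rw [Nat.sub_add_cancel hi1] at h
    omega
  have hb1 : 1 ≤ b := by
    have h := hj'mono (i' - 1) (by omega)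
    rw [Nat.sub_add_cancel hi'1] at h
    omega
  have hS : ∀ s ∈ (Finset.Icc 1 n).filter fun k => x k ≠ x' k,
      s < min a b ∨ max a b < s := by
    intro s hs
    by_contra hcon
    push_neg at hcon
    have : s ∈ ((Finset.Icc 1 n).filter fun k => x k ≠ x' k) ∩
        Finset.Icc (min a b) (max a b) :=
      Finset.mem_inter.mpr ⟨hs, Finset.mem_Icc.mpr ⟨hcon.1, hcon.2⟩⟩
    rw [hempty] at this
    exact absurd this (Finset.notMem_empty s)
  rw [← hsupp]
  unfold hdist
  apply Finset.card_le_card_of_injOn (fun s => if s < min a b then s else s - 1)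
  · intro s hs
    have hs' := hS s hs
    simp only [Finset.mem_coe, Finset.mem_filter, Finset.mem_Icc] at hs ⊢
    obtain ⟨⟨hs1, hsn⟩, hne⟩ := hs
    rcases hs' with h | h
    · rw [if_pos h]
      refine ⟨⟨hs1, by omega⟩, ?_⟩
      unfold delN
      rw [if_pos (show s < a by omega), if_pos (show s < b by omega)]
      exact hne
    · rw [if_neg (by omega)]
      refine ⟨⟨by omega, by omega⟩, ?_⟩
      unfold delN
      rw [if_neg (show ¬ s - 1 < a by omega), if_neg (show ¬ s - 1 < b by omega)]
      have hss : s - 1 + 1 = s := by omega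
      rw [hss]
      exact hne
  · intro s hs t ht hst
    have hs' := hS s hs
    have ht' := hS t ht
    simp only at hst
    split_ifs at hst <;> omega
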